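/- Let R be a semiring with subsemirings R₁ and R₂ such that R is additively generated by R₁R₂ and every element of R₁ commutes with every element of R₂. If M₁ is an additive spine of R₁ and M₂ is an additive spine of R₂, then the product of the halos, hal_{R₁}(M₁)·hal_{R₂}(M₂), is contained in the halo of M₁M₂ in R, and M₁M₂ is an additive spine of R. -/

import Mathlib

/-- Halo of `M` relative to a subset `A` of a semiring `R`: elements `x ∈ A` such that
there are `y, z ∈ A` with `y*x ∈ M` and `z*(y*x) = x`. -/
def haloIn {R : Type*} [Semiring R] (A M : Set R) : Set R :=
  {x | x ∈ A ∧ ∃ y ∈ A, ∃ z ∈ A, y * x ∈ M ∧ z * (y * x) = x}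

theorem spine_of_product {R : Type*} [Semiring R] (R₁ R₂ : Subsemiring R)
    (hgen : AddSubmonoid.closure (Set.image2 (· * ·) (R₁ : Set R) (R₂ : Set R)) = ⊤)
    (hcomm : ∀ a ∈ R₁, ∀ b ∈ R₂, a * b = b * a)
    (M₁ M₂ : Set R) (hM₁ : M₁ ⊆ R₁) (hM₂ : M₂ ⊆ R₂)
    (hsp₁ : (R₁ : Set R) ⊆ AddSubmonoid.closure (haloIn (R₁ : Set R) M₁))
    (hsp₂ : (R₂ : Set R) ⊆ AddSubmonoid.closure (haloIn (R₂ : Set R) M₂)) :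
    Set.image2 (· * ·) (haloIn (R₁ : Set R) M₁) (haloIn (R₂ : Set R) M₂) ⊆
      haloIn (Set.univ : Set R) (Set.image2 (· * ·) M₁ M₂) ∧
    AddSubmonoid.closure (haloIn (Set.univ : Set R) (Set.image2 (· * ·) M₁ M₂)) = ⊤ := by
  have key : Set.image2 (· * ·) (haloIn (R₁ : Set R) M₁) (haloIn (R₂ : Set R) M₂) ⊆
      haloIn (Set.univ : Set R) (Set.image2 (· * ·) M₁ M₂) := by
    rintro _ ⟨a, ⟨ha, y₁, hy₁, z₁, hz₁, hya, hza⟩, b, ⟨hb, y₂, hy₂, z₂, hz₂, hyb, hzb⟩, rfl⟩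
    have h1 : y₁ * y₂ * (a * b) = (y₁ * a) * (y₂ * b) := by
      rw [mul_assoc, ← mul_assoc y₂, ← hcomm a ha y₂ hy₂, mul_assoc, ← mul_assoc]
    refine ⟨trivial, y₁ * y₂, trivial, z₁ * z₂, trivial, ?_, ?_⟩
    · rw [h1]; exact ⟨_, hya, _, hyb, rfl⟩
    · rw [h1]
      have h2 : z₁ * z₂ * ((y₁ * a) * (y₂ * b)) = (z₁ * (y₁ * a)) * (z₂ * (y₂ * b)) := by
        rw [mul_assoc, ← mul_assoc z₂, ← hcomm _ (R₁.mul_mem hy₁ ha) z₂ hz₂,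
          mul_assoc, ← mul_assoc]
      rw [h2, hza, hzb]
  refine ⟨key, ?_⟩
  set C := AddSubmonoid.closure (haloIn (Set.univ : Set R) (Set.image2 (· * ·) M₁ M₂)) with hC
  have step : ∀ x ∈ haloIn (R₁ : Set R) M₁, ∀ w ∈ AddSubmonoid.closure (haloIn (R₂ : Set R) M₂),
      x * w ∈ C := by
    intro x hx w hw
    induction hw using AddSubmonoid.closure_induction with
    | mem w hw => exact AddSubmonoid.subset_closure (key ⟨x, hx, w, hw, rfl⟩)
    | zero => simpa using C.zero_mem
    | add w₁ w₂ _ _ h1 h2 => rw [mul_add]; exact C.add_mem h1 h2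
  have step2 : ∀ a ∈ AddSubmonoid.closure (haloIn (R₁ : Set R) M₁), ∀ b ∈ R₂, a * b ∈ C := by
    intro a ha b hb
    induction ha using AddSubmonoid.closure_induction with
    | mem a ha' => exact step a ha' b (hsp₂ hb)
    | zero => simpa using C.zero_mem
    | add a₁ a₂ _ _ h1 h2 => rw [add_mul]; exact C.add_mem h1 h2
  have : Set.image2 (· * ·) (R₁ : Set R) (R₂ : Set R) ⊆ C := by
    rintro _ ⟨a, ha, b, hb, rfl⟩
    exact step2 a (hsp₁ ha) b hb
  have := AddSubmonoid.closure_le.mpr this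
  rw [hgen] at this
  exact top_le_iff.mp this
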